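/- Let G̃(x,y) ≡ G̃(t,s,x,y) = ∑_{n≥0} t^n ∑_{(k,a,b)} p̃_{n,(k,a,b)} s^k x^a y^b, an element of ℤ[s,s^{−1},x,y][[t]]. Then G̃ satisfies the functional equation G̃(x,y) = 1 + t·x·y·G̃(x,y) + (t/x)(G̃(x,y) − G̃(0,y)) + (t/y)(G̃(x,y) − G̃(x,0)) + (t·s/x)(G̃(0,x) − G̃(0,0)) + t·s^{−1}·y²·G̃(y,0), where the substituted series and the quotients by x and y are well defined in ℤ[s,s^{−1},x,y][[t]]. -/

import Mathlib

open scoped BigOperators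
noncomputable section

abbrev WSt : Type := ℤ × ℕ × ℕ

def cellStep (v w : WSt) : Prop :=
  w = (v.1, v.2.1 + 1, v.2.2 + 1) ∨
  (1 ≤ v.2.2 ∧ w = (v.1, v.2.1, v.2.2 - 1)) ∨
  (1 ≤ v.2.1 ∧ w = (v.1, v.2.1 - 1, v.2.2)) ∨
  (v.2.1 = 0 ∧ w = (v.1 + 1, v.2.2, 0)) ∨
  (v.2.2 = 0 ∧ w = (v.1 - 1, 0, v.2.1 + 1))

def vertStep (v w : WSt) : Prop :=
  w = (v.1, v.2.1 + 1, v.2.2 + 1) ∨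
  (1 ≤ v.2.2 ∧ w = (v.1, v.2.1, v.2.2 - 1)) ∨
  (1 ≤ v.2.1 ∧ w = (v.1, v.2.1 - 1, v.2.2)) ∨
  (v.2.1 = 0 ∧ 1 ≤ v.2.2 ∧ w = (v.1 + 1, v.2.2 - 1, 0)) ∨
  (v.2.2 = 0 ∧ w = (v.1 - 1, 0, v.2.1 + 2))

def pathCount (step : WSt → WSt → Prop) (n : ℕ) (v : WSt) : ℕ :=
  Nat.card {p : Fin (n + 1) → WSt //
    p 0 = ((0 : ℤ), 0, 0) ∧ p (Fin.last n) = v ∧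
    ∀ i : Fin n, step (p i.castSucc) (p i.succ)}

/-- number of cell-centred excursions of length `n` with winding angle `2πk/3` -/
def eCell (n : ℕ) (k : ℤ) : ℕ := pathCount cellStep n (k, 0, 0)

/-- number of vertex-centred walks of length `n` with winding angle `2πk/3` -/
def eVert (n : ℕ) (k : ℤ) : ℕ := pathCount vertStep n (k, 0, 0)

/-- The series `T_k(u,q)`. -/
def Tk (k : ℕ) (u q : ℂ) : ℂ :=
  ∑' n : ℕ, (-1 : ℂ) ^ n * ((2 * n + 1 : ℕ) : ℂ) ^ k * q ^ (n * (n + 1) / 2) *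
    (u ^ (n + 1) - (-1 : ℂ) ^ k * u ^ (-(n : ℤ)))

/-- Jacobi theta function θ₁₁. -/
def jTheta (z τ : ℂ) : ℂ :=
  ∑' n : ℤ, (-1 : ℂ) ^ n *
    Complex.exp (((2 * (n : ℂ) + 1) / 2) ^ 2 * Complex.I * (Real.pi : ℂ) * τ +
      (2 * (n : ℂ) + 1) * Complex.I * z)

/-- derivative of θ with respect to z -/
def jTheta' (z τ : ℂ) : ℂ := deriv (fun w => jTheta w τ) z

/-- The ring `ℤ[s, s⁻¹]` of Laurent polynomials in the winding variable `s`. -/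
abbrev LZ := LaurentPolynomial ℤ

/-- Coefficient of `t^n x^a y^b` (with `d 0 = n`, `d 1 = a`, `d 2 = b`) in the full
generating function `G̃(t,s,x,y)` of vertex-centred Kreweras walks: `∑_k p̃_{n,(k,a,b)} s^k`.
Since a walk of length `n` has wedge index of absolute value at most `n`, the sum is finite. -/
def vertCoeff (d : Fin 3 →₀ ℕ) : LZ :=
  ∑ k ∈ Finset.Icc (-(d 0 : ℤ)) (d 0 : ℤ),
    (pathCount vertStep (d 0) (k, d 1, d 2) : LZ) * LaurentPolynomial.T k

/-- `G̃(x,y)`, an element of `ℤ[s,s⁻¹][[t,x,y]]` (containing `ℤ[s,s⁻¹,x,y][[t]]`). -/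
def vertGL : MvPowerSeries (Fin 3) LZ := fun d => vertCoeff d

/-- `G̃(0,y)` -/
def vertGL0y : MvPowerSeries (Fin 3) LZ := fun d => if d 1 = 0 then vertCoeff d else 0

/-- `G̃(x,0)` -/
def vertGLx0 : MvPowerSeries (Fin 3) LZ := fun d => if d 2 = 0 then vertCoeff d else 0

/-- `G̃(0,x)`: the series in `t`, `x` whose coefficient of `t^n x^a` is `∑_k p̃_{n,(k,0,a)} s^k`. -/
def vertGL0x : MvPowerSeries (Fin 3) LZ := fun d =>
  if d 2 = 0 then
    ∑ k ∈ Finset.Icc (-(d 0 : ℤ)) (d 0 : ℤ),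
      (pathCount vertStep (d 0) (k, 0, d 1) : LZ) * LaurentPolynomial.T k
  else 0

/-- `G̃(y,0)`: the series in `t`, `y` whose coefficient of `t^n y^b` is `∑_k p̃_{n,(k,b,0)} s^k`. -/
def vertGLy0 : MvPowerSeries (Fin 3) LZ := fun d =>
  if d 1 = 0 then
    ∑ k ∈ Finset.Icc (-(d 0 : ℤ)) (d 0 : ℤ),
      (pathCount vertStep (d 0) (k, d 2, 0) : LZ) * LaurentPolynomial.T k
  else 0

/-- `G̃(0,0)`: the series in `t` whose coefficient of `t^n` is `∑_k p̃_{n,(k,0,0)} s^k`. -/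
def vertGL00 : MvPowerSeries (Fin 3) LZ := fun d =>
  if d 1 = 0 ∧ d 2 = 0 then vertCoeff d else 0

instance (v w : WSt) : Decidable (vertStep v w) := by unfold vertStep; infer_instance

def KPath (n : ℕ) (v : WSt) : Type :=
  {p : Fin (n + 1) → WSt //
    p 0 = ((0 : ℤ), 0, 0) ∧ p (Fin.last n) = v ∧
    ∀ i : Fin n, vertStep (p i.castSucc) (p i.succ)}

lemma pathCount_vert (n : ℕ) (v : WSt) : pathCount vertStep n v = Nat.card (KPath n v) := rfl

def box (m : ℕ) : Set WSt := {v | -(m : ℤ) ≤ v.1 ∧ v.1 ≤ (m : ℤ) ∧ v.2.1 ≤ 2*m ∧ v.2.2 ≤ 2*m}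

lemma box_finite (m : ℕ) : (box m).Finite := by
  have h : box m ⊆ (Set.Icc (-(m:ℤ)) m) ×ˢ ((Set.Iic (2*m)) ×ˢ (Set.Iic (2*m))) := by
    rintro ⟨k,a,b⟩ ⟨h1,h2,h3,h4⟩
    exact ⟨⟨h1, h2⟩, h3, h4⟩
  exact (((Set.finite_Icc _ _).prod ((Set.finite_Iic _).prod (Set.finite_Iic _))).subset h)

lemma box_mono {m m' : ℕ} (h : m ≤ m') : box m ⊆ box m' := by
  rintro ⟨k,a,b⟩ ⟨h1,h2,h3,h4⟩
  refine ⟨?_, ?_, ?_, ?_⟩ <;> simp only at * <;> omega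

lemma step_box {v w : WSt} (h : vertStep v w) {m : ℕ} (hv : v ∈ box m) : w ∈ box (m+1) := by
  obtain ⟨k,a,b⟩ := v; obtain ⟨k',a',b'⟩ := w
  simp only [box, Set.mem_setOf_eq] at hv ⊢
  rcases h with h | ⟨h1,h⟩ | ⟨h1,h⟩ | ⟨h1,h2,h⟩ | ⟨h1,h⟩ <;> simp_all [Prod.mk.injEq] <;> omega

lemma path_in_box {n : ℕ} (p : Fin (n+1) → WSt) (h0 : p 0 = ((0:ℤ),0,0))
    (hs : ∀ i : Fin n, vertStep (p i.castSucc) (p i.succ)) :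
    ∀ i : Fin (n+1), p i ∈ box i.1 := by
  rintro ⟨i, hi⟩
  induction i with
  | zero =>
    rw [Fin.mk_zero, h0]
    refine ⟨by simp, by simp, by simp, by simp⟩
  | succ j ih =>
    have hj : j < n := by omega
    have hstep := hs ⟨j, hj⟩
    have hmem : p ((⟨j, hj⟩ : Fin n).castSucc) ∈ box j := ih (by omega)
    have := step_box hstep hmem
    exact this

instance KPath_finite (n : ℕ) (v : WSt) : Finite (KPath n v) := by
  have hsub : {p : Fin (n+1) → WSt | p 0 = ((0:ℤ),0,0) ∧ p (Fin.last n) = v ∧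
      ∀ i : Fin n, vertStep (p i.castSucc) (p i.succ)}
      ⊆ Set.pi Set.univ (fun _ : Fin (n+1) => box n) := by
    rintro p ⟨h0, _, hs⟩ i _
    exact box_mono (by omega : i.1 ≤ n) (path_in_box p h0 hs i)
  exact ((Set.Finite.pi fun _ => box_finite n).subset hsub).to_subtype

lemma pathCount_out {n : ℕ} {k : ℤ} {a b : ℕ} (h : ¬(-(n:ℤ) ≤ k ∧ k ≤ (n:ℤ))) :
    pathCount vertStep n (k,a,b) = 0 := by
  rw [pathCount_vert]
  have : IsEmpty (KPath n (k,a,b)) := by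
    refine ⟨fun q => ?_⟩
    obtain ⟨p, h0, hl, hs⟩ := q
    have hb := path_in_box p h0 hs (Fin.last n)
    rw [hl] at hb
    exact h ⟨hb.1, hb.2.1⟩
  haveI := this
  exact Nat.card_of_isEmpty

lemma pathCount_zero (v : WSt) :
    pathCount vertStep 0 v = if v = ((0:ℤ),0,0) then 1 else 0 := by
  rw [pathCount_vert]
  split
  · rename_i hv
    subst hv
    have : Unique (KPath 0 ((0:ℤ),0,0)) := by
      refine ⟨⟨⟨fun _ => ((0:ℤ),0,0), rfl, rfl, fun i => i.elim0⟩⟩, ?_⟩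
      rintro ⟨p, h0, hl, hs⟩
      apply Subtype.ext
      funext i
      have hi : i = 0 := by
        apply Fin.ext
        omega
      subst hi
      exact h0
    haveI := this
    exact Nat.card_unique
  · rename_i hv
    have : IsEmpty (KPath 0 v) := by
      refine ⟨fun q => ?_⟩
      obtain ⟨p, h0, hl, _⟩ := q
      apply hv
      rw [← hl, show Fin.last 0 = 0 from Fin.ext (by simp), h0]
    haveI := this
    exact Nat.card_of_isEmpty

def predFinset (v : WSt) : Finset WSt :=
  ({(v.1, v.2.1 - 1, v.2.2 - 1), (v.1, v.2.1, v.2.2 + 1), (v.1, v.2.1 + 1, v.2.2),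
    (v.1 - 1, 0, v.2.1 + 1), (v.1 + 1, v.2.2 - 2, 0)} : Finset WSt).filter (vertStep · v)

lemma mem_predFinset {v w : WSt} : w ∈ predFinset v ↔ vertStep w v := by
  constructor
  · exact fun h => (Finset.mem_filter.mp h).2
  · intro h
    refine Finset.mem_filter.mpr ⟨?_, h⟩
    obtain ⟨k,a,b⟩ := v; obtain ⟨k',a',b'⟩ := w
    simp only [Finset.mem_insert, Finset.mem_singleton, Prod.mk.injEq]
    rcases h with h | ⟨h1,h⟩ | ⟨h1,h⟩ | ⟨h1,h2,h⟩ | ⟨h1,h⟩ <;>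
      simp_all [Prod.mk.injEq] <;> omega

instance finPreds (v : WSt) : Finite {w : WSt // vertStep w v} := by
  have : {w : WSt | vertStep w v}.Finite := by
    apply (predFinset v).finite_toSet.subset
    intro w hw
    exact mem_predFinset.mpr hw
  exact this.to_subtype

def stepEquiv (n : ℕ) (v : WSt) :
    KPath (n+1) v ≃ Σ w : {w : WSt // vertStep w v}, KPath n w.1 where
  toFun p := ⟨⟨p.1 (Fin.last n).castSucc, by
      have h := p.2.2.2 (Fin.last n)
      rwa [Fin.succ_last, p.2.2.1] at h⟩,
    ⟨fun i => p.1 i.castSucc, by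
      refine ⟨?_, rfl, ?_⟩
      · simpa using p.2.1
      · intro i
        have h := p.2.2.2 i.castSucc
        rwa [Fin.succ_castSucc] at h⟩⟩
  invFun x := ⟨Fin.snoc x.2.1 v, by
      refine ⟨?_, ?_, ?_⟩
      · rw [show (0 : Fin (n+1+1)) = Fin.castSucc 0 from rfl, Fin.snoc_castSucc]
        exact x.2.2.1
      · exact Fin.snoc_last _ _
      · intro i
        refine Fin.lastCases ?_ ?_ i
        · rw [Fin.succ_last, Fin.snoc_last, Fin.snoc_castSucc, x.2.2.2.1]
          exact x.1.2
        · intro j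
          rw [Fin.succ_castSucc, Fin.snoc_castSucc, Fin.snoc_castSucc]
          exact x.2.2.2.2 j⟩
  left_inv := by
    rintro ⟨p, h0, hl, hs⟩
    apply Subtype.ext
    funext i
    refine Fin.lastCases ?_ ?_ i
    · simp [Fin.snoc_last, hl]
    · intro j
      simp [Fin.snoc_castSucc]
  right_inv := by
    rintro ⟨⟨w, hw⟩, ⟨q, h0, hl, hs⟩⟩
    refine Sigma.subtype_ext (Subtype.ext ?_) ?_
    · simp [hl]
    · funext i
      simp

lemma pathCount_succ (n : ℕ) (v : WSt) :
    pathCount vertStep (n+1) v = ∑ w ∈ predFinset v, pathCount vertStep n w := by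
  classical
  rw [pathCount_vert, Nat.card_congr (stepEquiv n v)]
  letI : Fintype {w : WSt // vertStep w v} := Fintype.ofFinite _
  letI : ∀ w : WSt, Fintype (KPath n w) := fun w => Fintype.ofFinite _
  rw [Nat.card_eq_fintype_card, Fintype.card_sigma]
  rw [Finset.sum_subtype (predFinset v) (fun w => mem_predFinset)
    (fun w => pathCount vertStep n w)]
  refine Finset.sum_congr rfl fun w _ => ?_
  rw [pathCount_vert, Nat.card_eq_fintype_card]

lemma vs1 (k : ℤ) (a b : ℕ) : vertStep (k, a-1, b-1) (k,a,b) ↔ (1 ≤ a ∧ 1 ≤ b) := by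
  unfold vertStep; simp [Prod.ext_iff]; omega

lemma vs2 (k : ℤ) (a b : ℕ) : vertStep (k, a, b+1) (k,a,b) := by
  unfold vertStep; simp [Prod.ext_iff]

lemma vs3 (k : ℤ) (a b : ℕ) : vertStep (k, a+1, b) (k,a,b) := by
  unfold vertStep; simp [Prod.ext_iff]

lemma vs4 (k : ℤ) (a b : ℕ) : vertStep (k-1, 0, a+1) (k,a,b) ↔ b = 0 := by
  unfold vertStep; simp [Prod.ext_iff]; omega

lemma vs5 (k : ℤ) (a b : ℕ) : vertStep (k+1, b-2, 0) (k,a,b) ↔ (a = 0 ∧ 2 ≤ b) := by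
  unfold vertStep; simp [Prod.ext_iff]; omega

lemma rec5 (n : ℕ) (k : ℤ) (a b : ℕ) :
    pathCount vertStep (n+1) (k,a,b) =
      (if 1 ≤ a ∧ 1 ≤ b then pathCount vertStep n (k,a-1,b-1) else 0)
      + pathCount vertStep n (k,a,b+1)
      + pathCount vertStep n (k,a+1,b)
      + (if b = 0 then pathCount vertStep n (k-1,0,a+1) else 0)
      + (if a = 0 ∧ 2 ≤ b then pathCount vertStep n (k+1,b-2,0) else 0) := by
  classical
  rw [pathCount_succ, predFinset, Finset.sum_filter]
  rw [show (({((k,a,b).1, (k,a,b).2.1 - 1, (k,a,b).2.2 - 1), ((k,a,b).1, (k,a,b).2.1, (k,a,b).2.2 + 1),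
      ((k,a,b).1, (k,a,b).2.1 + 1, (k,a,b).2.2), ((k,a,b).1 - 1, 0, (k,a,b).2.1 + 1),
      ((k,a,b).1 + 1, (k,a,b).2.2 - 2, 0)}) : Finset WSt)
    = {(k, a-1, b-1), (k, a, b+1), (k, a+1, b), (k-1, 0, a+1), (k+1, b-2, 0)} from rfl]
  rw [Finset.sum_insert (by simp [Prod.ext_iff] <;> omega),
      Finset.sum_insert (by simp [Prod.ext_iff] <;> omega),
      Finset.sum_insert (by simp [Prod.ext_iff] <;> omega),
      Finset.sum_insert (by simp [Prod.ext_iff] <;> omega),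
      Finset.sum_singleton]
  rw [if_pos (vs2 k a b), if_pos (vs3 k a b)]
  simp only [vs1, vs4, vs5]
  omega


open LaurentPolynomial in
lemma main_coeff (n a b : ℕ) :
    (∑ k ∈ Finset.Icc (-(n:ℤ)) (n:ℤ),
        (pathCount vertStep n (k,a,b) : LZ) * T k)
    = (if n = 0 ∧ a = 0 ∧ b = 0 then 1 else 0)
    + (if 1 ≤ n ∧ 1 ≤ a ∧ 1 ≤ b then
        ∑ k ∈ Finset.Icc (-(n-1:ℕ):ℤ) ((n-1:ℕ):ℤ),
          (pathCount vertStep (n-1) (k,a-1,b-1) : LZ) * T k else 0)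
    + (if 1 ≤ n then ∑ k ∈ Finset.Icc (-(n-1:ℕ):ℤ) ((n-1:ℕ):ℤ),
          (pathCount vertStep (n-1) (k,a+1,b) : LZ) * T k else 0)
    + (if 1 ≤ n then ∑ k ∈ Finset.Icc (-(n-1:ℕ):ℤ) ((n-1:ℕ):ℤ),
          (pathCount vertStep (n-1) (k,a,b+1) : LZ) * T k else 0)
    + (if 1 ≤ n ∧ b = 0 then T 1 * ∑ k ∈ Finset.Icc (-(n-1:ℕ):ℤ) ((n-1:ℕ):ℤ),
          (pathCount vertStep (n-1) (k,0,a+1) : LZ) * T k else 0)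
    + (if 1 ≤ n ∧ 2 ≤ b ∧ a = 0 then T (-1) * ∑ k ∈ Finset.Icc (-(n-1:ℕ):ℤ) ((n-1:ℕ):ℤ),
          (pathCount vertStep (n-1) (k,b-2,0) : LZ) * T k else 0) := by
  classical
  cases n with
  | zero =>
    simp only [Nat.cast_zero, neg_zero, Finset.Icc_self, Finset.sum_singleton,
      pathCount_zero, Prod.mk.injEq, T_zero, mul_one]
    split_ifs <;> simp_all <;> omega
  | succ m =>
    simp only [Nat.add_sub_cancel]
    rw [if_neg (by omega : ¬((m+1) = 0 ∧ a = 0 ∧ b = 0))]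
    have hsplit : ∀ k ∈ Finset.Icc (-(m+1:ℕ):ℤ) ((m+1:ℕ):ℤ),
        (pathCount vertStep (m+1) (k,a,b) : LZ) * T k
        = (if 1 ≤ a ∧ 1 ≤ b then (pathCount vertStep m (k,a-1,b-1) : LZ) else 0) * T k
          + (pathCount vertStep m (k,a,b+1) : LZ) * T k
          + (pathCount vertStep m (k,a+1,b) : LZ) * T k
          + (if b = 0 then (pathCount vertStep m (k-1,0,a+1) : LZ) else 0) * T k
          + (if a = 0 ∧ 2 ≤ b then (pathCount vertStep m (k+1,b-2,0) : LZ) else 0) * T k := by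
      intro k _
      rw [rec5]
      push_cast [apply_ite (fun x : ℕ => (x : LZ))]
      ring
    rw [Finset.sum_congr rfl hsplit, Finset.sum_add_distrib, Finset.sum_add_distrib,
      Finset.sum_add_distrib, Finset.sum_add_distrib]
    have hS1 : (∑ k ∈ Finset.Icc (-(m+1:ℕ):ℤ) ((m+1:ℕ):ℤ),
        (if 1 ≤ a ∧ 1 ≤ b then (pathCount vertStep m (k,a-1,b-1) : LZ) else 0) * T k)
        = (if 1 ≤ a ∧ 1 ≤ b then ∑ k ∈ Finset.Icc (-(m:ℕ):ℤ) ((m:ℕ):ℤ),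
            (pathCount vertStep m (k,a-1,b-1) : LZ) * T k else 0) := by
      by_cases hC : 1 ≤ a ∧ 1 ≤ b
      · simp only [if_pos hC]
        symm
        apply Finset.sum_subset
        · apply Finset.Icc_subset_Icc <;> push_cast <;> omega
        · intro k hk hk'
          simp only [Finset.mem_Icc] at hk hk'
          rw [pathCount_out (by push_cast at hk hk' ⊢; omega)]
          simp
      · simp [hC]
    have hS2 : (∑ k ∈ Finset.Icc (-(m+1:ℕ):ℤ) ((m+1:ℕ):ℤ),
        (pathCount vertStep m (k,a,b+1) : LZ) * T k)
        = ∑ k ∈ Finset.Icc (-(m:ℕ):ℤ) ((m:ℕ):ℤ),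
            (pathCount vertStep m (k,a,b+1) : LZ) * T k := by
      symm
      apply Finset.sum_subset
      · apply Finset.Icc_subset_Icc <;> push_cast <;> omega
      · intro k hk hk'
        simp only [Finset.mem_Icc] at hk hk'
        rw [pathCount_out (by push_cast at hk hk' ⊢; omega)]
        simp
    have hS3 : (∑ k ∈ Finset.Icc (-(m+1:ℕ):ℤ) ((m+1:ℕ):ℤ),
        (pathCount vertStep m (k,a+1,b) : LZ) * T k)
        = ∑ k ∈ Finset.Icc (-(m:ℕ):ℤ) ((m:ℕ):ℤ),
            (pathCount vertStep m (k,a+1,b) : LZ) * T k := by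
      symm
      apply Finset.sum_subset
      · apply Finset.Icc_subset_Icc <;> push_cast <;> omega
      · intro k hk hk'
        simp only [Finset.mem_Icc] at hk hk'
        rw [pathCount_out (by push_cast at hk hk' ⊢; omega)]
        simp
    have hS4 : (∑ k ∈ Finset.Icc (-(m+1:ℕ):ℤ) ((m+1:ℕ):ℤ),
        (if b = 0 then (pathCount vertStep m (k-1,0,a+1) : LZ) else 0) * T k)
        = (if b = 0 then T 1 * ∑ k ∈ Finset.Icc (-(m:ℕ):ℤ) ((m:ℕ):ℤ),
            (pathCount vertStep m (k,0,a+1) : LZ) * T k else 0) := by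
      by_cases hb : b = 0
      · simp only [if_pos hb]
        rw [Finset.mul_sum]
        rw [show (∑ k ∈ Finset.Icc (-(m+1:ℕ):ℤ) ((m+1:ℕ):ℤ),
            (pathCount vertStep m (k-1,0,a+1) : LZ) * T k)
          = ∑ k ∈ Finset.Icc (-(m:ℕ)+1:ℤ) ((m:ℕ)+1:ℤ),
            (pathCount vertStep m (k-1,0,a+1) : LZ) * T k from
          (Finset.sum_subset
            (Finset.Icc_subset_Icc (by push_cast; omega) (by push_cast; omega))
            (by
              intro k hk hk'
              simp only [Finset.mem_Icc] at hk hk'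
              rw [pathCount_out (by push_cast at hk hk' ⊢; omega)]
              simp)).symm]
        apply Finset.sum_nbij' (fun k => k - 1) (fun k => k + 1)
        · intro x hx; simp only [Finset.mem_Icc] at hx ⊢; omega
        · intro x hx; simp only [Finset.mem_Icc] at hx ⊢; omega
        · intro x _; ring
        · intro x _; ring
        · intro k _
          rw [mul_left_comm, ← T_add, show (1:ℤ) + (k-1) = k from by ring]
      · simp [hb]
    have hS5 : (∑ k ∈ Finset.Icc (-(m+1:ℕ):ℤ) ((m+1:ℕ):ℤ),
        (if a = 0 ∧ 2 ≤ b then (pathCount vertStep m (k+1,b-2,0) : LZ) else 0) * T k)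
        = (if 2 ≤ b ∧ a = 0 then T (-1) * ∑ k ∈ Finset.Icc (-(m:ℕ):ℤ) ((m:ℕ):ℤ),
            (pathCount vertStep m (k,b-2,0) : LZ) * T k else 0) := by
      by_cases hc : a = 0 ∧ 2 ≤ b
      · simp only [if_pos hc, if_pos (And.intro hc.2 hc.1)]
        rw [Finset.mul_sum]
        rw [show (∑ k ∈ Finset.Icc (-(m+1:ℕ):ℤ) ((m+1:ℕ):ℤ),
            (pathCount vertStep m (k+1,b-2,0) : LZ) * T k)
          = ∑ k ∈ Finset.Icc (-(m:ℕ)-1:ℤ) ((m:ℕ)-1:ℤ),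
            (pathCount vertStep m (k+1,b-2,0) : LZ) * T k from
          (Finset.sum_subset
            (Finset.Icc_subset_Icc (by push_cast; omega) (by push_cast; omega))
            (by
              intro k hk hk'
              simp only [Finset.mem_Icc] at hk hk'
              rw [pathCount_out (by push_cast at hk hk' ⊢; omega)]
              simp)).symm]
        apply Finset.sum_nbij' (fun k => k + 1) (fun k => k - 1)
        · intro x hx; simp only [Finset.mem_Icc] at hx ⊢; omega
        · intro x hx; simp only [Finset.mem_Icc] at hx ⊢; omega
        · intro x _; ring
        · intro x _; ring
        · intro k _
          rw [mul_left_comm, ← T_add, show (-1:ℤ) + (k+1) = k from by ring]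
      · rw [if_neg (show ¬(2 ≤ b ∧ a = 0) from by tauto)]
        simp [hc]
    rw [hS1, hS2, hS3, hS4, hS5]
    have h1le : 1 ≤ m + 1 := by omega
    simp only [if_pos h1le]
    have hg1 : (if 1 ≤ m+1 ∧ 1 ≤ a ∧ 1 ≤ b then ∑ k ∈ Finset.Icc (-(m:ℕ):ℤ) ((m:ℕ):ℤ),
        (pathCount vertStep m (k,a-1,b-1) : LZ) * T k else 0)
        = (if 1 ≤ a ∧ 1 ≤ b then ∑ k ∈ Finset.Icc (-(m:ℕ):ℤ) ((m:ℕ):ℤ),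
        (pathCount vertStep m (k,a-1,b-1) : LZ) * T k else 0) := by
      congr 1
      simp only [eq_iff_iff]
      omega
    have hg4 : (if 1 ≤ m+1 ∧ b = 0 then T 1 * ∑ k ∈ Finset.Icc (-(m:ℕ):ℤ) ((m:ℕ):ℤ),
        (pathCount vertStep m (k,0,a+1) : LZ) * T k else 0)
        = (if b = 0 then T 1 * ∑ k ∈ Finset.Icc (-(m:ℕ):ℤ) ((m:ℕ):ℤ),
        (pathCount vertStep m (k,0,a+1) : LZ) * T k else 0) := by
      congr 1
      simp only [eq_iff_iff]
      omega
    have hg5 : (if 1 ≤ m+1 ∧ 2 ≤ b ∧ a = 0 then T (-1) * ∑ k ∈ Finset.Icc (-(m:ℕ):ℤ) ((m:ℕ):ℤ),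
        (pathCount vertStep m (k,b-2,0) : LZ) * T k else 0)
        = (if 2 ≤ b ∧ a = 0 then T (-1) * ∑ k ∈ Finset.Icc (-(m:ℕ):ℤ) ((m:ℕ):ℤ),
        (pathCount vertStep m (k,b-2,0) : LZ) * T k else 0) := by
      congr 1
      simp only [eq_iff_iff]
      omega
    rw [hg1, hg4, hg5]
    ring

open LaurentPolynomial in
lemma coeffXmul (i : Fin 3) (f : MvPowerSeries (Fin 3) LZ) (d : Fin 3 →₀ ℕ) :
    MvPowerSeries.coeff (R := LZ) d (MvPowerSeries.X i * f)
    = if 1 ≤ d i then MvPowerSeries.coeff (R := LZ) (d - Finsupp.single i 1) f else 0 := by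
  rw [MvPowerSeries.X_def, MvPowerSeries.coeff_monomial_mul]
  simp only [one_mul]
  exact if_congr Finsupp.single_le_iff rfl rfl

lemma dz_iff (d : Fin 3 →₀ ℕ) : d = 0 ↔ d 0 = 0 ∧ d 1 = 0 ∧ d 2 = 0 := by
  constructor
  · rintro rfl; simp
  · rintro ⟨h0, h1, h2⟩
    ext i
    fin_cases i <;> simpa

open LaurentPolynomial in
def Qone : MvPowerSeries (Fin 3) LZ := fun d => vertCoeff (d + Finsupp.single 1 1)

open LaurentPolynomial in
def Qtwo : MvPowerSeries (Fin 3) LZ := fun d => vertCoeff (d + Finsupp.single 2 1)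

open LaurentPolynomial in
def Qthree : MvPowerSeries (Fin 3) LZ := fun d =>
  if d 2 = 0 then
    ∑ k ∈ Finset.Icc (-(d 0 : ℤ)) (d 0 : ℤ),
      (pathCount vertStep (d 0) (k, 0, d 1 + 1) : LZ) * T k
  else 0


open LaurentPolynomial MvPowerSeries

/-- equation (5): the functional equation for `G̃(x,y)`.  Here `Q1`, `Q2`,
`Q3` are the well-defined quotients `(G̃(x,y) − G̃(0,y))/x`, `(G̃(x,y) − G̃(x,0))/y` and
`(G̃(0,x) − G̃(0,0))/x`. -/
theorem vertex_functional_equation :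
    ∃ Q1 Q2 Q3 : MvPowerSeries (Fin 3) LZ,
      MvPowerSeries.X 1 * Q1 = vertGL - vertGL0y ∧
      MvPowerSeries.X 2 * Q2 = vertGL - vertGLx0 ∧
      MvPowerSeries.X 1 * Q3 = vertGL0x - vertGL00 ∧
      vertGL = 1 + MvPowerSeries.X 0 * MvPowerSeries.X 1 * MvPowerSeries.X 2 * vertGL +
        MvPowerSeries.X 0 * Q1 + MvPowerSeries.X 0 * Q2 +
        MvPowerSeries.X 0 * MvPowerSeries.C (σ := Fin 3) (R := LZ) (LaurentPolynomial.T 1) * Q3 +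
        MvPowerSeries.X 0 * MvPowerSeries.C (σ := Fin 3) (R := LZ) (LaurentPolynomial.T (-1)) *
          MvPowerSeries.X 2 ^ 2 * vertGLy0 := by
  classical
  refine ⟨Qone, Qtwo, Qthree, ?_, ?_, ?_, ?_⟩
  · -- X 1 * Q1 = vertGL - vertGL0y
    apply MvPowerSeries.ext; intro d
    rw [map_sub, coeffXmul]
    by_cases h : 1 ≤ d 1
    · rw [if_pos h]
      have hd : (d - Finsupp.single 1 1) + Finsupp.single 1 1 = d :=
        tsub_add_cancel_of_le (Finsupp.single_le_iff.mpr h)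
      show vertCoeff ((d - Finsupp.single 1 1) + Finsupp.single 1 1)
        = vertCoeff d - (if d 1 = 0 then vertCoeff d else 0)
      rw [hd, if_neg (by omega), sub_zero]
    · rw [if_neg h]
      show (0 : LZ) = vertCoeff d - (if d 1 = 0 then vertCoeff d else 0)
      rw [if_pos (by omega), sub_self]
  · -- X 2 * Q2 = vertGL - vertGLx0
    apply MvPowerSeries.ext; intro d
    rw [map_sub, coeffXmul]
    by_cases h : 1 ≤ d 2
    · rw [if_pos h]
      have hd : (d - Finsupp.single 2 1) + Finsupp.single 2 1 = d :=
        tsub_add_cancel_of_le (Finsupp.single_le_iff.mpr h)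
      show vertCoeff ((d - Finsupp.single 2 1) + Finsupp.single 2 1)
        = vertCoeff d - (if d 2 = 0 then vertCoeff d else 0)
      rw [hd, if_neg (by omega), sub_zero]
    · rw [if_neg h]
      show (0 : LZ) = vertCoeff d - (if d 2 = 0 then vertCoeff d else 0)
      rw [if_pos (by omega), sub_self]
  · -- X 1 * Q3 = vertGL0x - vertGL00
    apply MvPowerSeries.ext; intro d
    rw [map_sub, coeffXmul]
    have ev0 : (d - Finsupp.single 1 1 : Fin 3 →₀ ℕ) 0 = d 0 := by
      simp [Finsupp.tsub_apply, Finsupp.single_apply]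
    have ev1 : (d - Finsupp.single 1 1 : Fin 3 →₀ ℕ) 1 = d 1 - 1 := by
      simp [Finsupp.tsub_apply, Finsupp.single_apply]
    have ev2 : (d - Finsupp.single 1 1 : Fin 3 →₀ ℕ) 2 = d 2 := by
      simp [Finsupp.tsub_apply, Finsupp.single_apply]
    by_cases h : 1 ≤ d 1
    · rw [if_pos h]
      show (if (d - Finsupp.single 1 1 : Fin 3 →₀ ℕ) 2 = 0 then
          ∑ k ∈ Finset.Icc (-((d - Finsupp.single 1 1 : Fin 3 →₀ ℕ) 0 : ℤ))
              (((d - Finsupp.single 1 1 : Fin 3 →₀ ℕ)) 0 : ℤ),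
            (pathCount vertStep ((d - Finsupp.single 1 1 : Fin 3 →₀ ℕ) 0)
              (k, 0, (d - Finsupp.single 1 1 : Fin 3 →₀ ℕ) 1 + 1) : LZ) * T k
        else 0)
        = (if d 2 = 0 then
            ∑ k ∈ Finset.Icc (-(d 0 : ℤ)) (d 0 : ℤ),
              (pathCount vertStep (d 0) (k, 0, d 1) : LZ) * T k
          else 0)
          - (if d 1 = 0 ∧ d 2 = 0 then vertCoeff d else 0)
      rw [ev0, ev1, ev2, show d 1 - 1 + 1 = d 1 from by omega,
        if_neg (by omega : ¬(d 1 = 0 ∧ d 2 = 0)), sub_zero]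
    · rw [if_neg h]
      have h1 : d 1 = 0 := by omega
      show (0 : LZ)
        = (if d 2 = 0 then
            ∑ k ∈ Finset.Icc (-(d 0 : ℤ)) (d 0 : ℤ),
              (pathCount vertStep (d 0) (k, 0, d 1) : LZ) * T k
          else 0)
          - (if d 1 = 0 ∧ d 2 = 0 then vertCoeff d else 0)
      by_cases h2 : d 2 = 0
      · rw [if_pos h2, if_pos ⟨h1, h2⟩]
        have : vertCoeff d = ∑ k ∈ Finset.Icc (-(d 0 : ℤ)) (d 0 : ℤ),
            (pathCount vertStep (d 0) (k, 0, d 1) : LZ) * T k := by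
          show (∑ k ∈ Finset.Icc (-(d 0 : ℤ)) (d 0 : ℤ),
            (pathCount vertStep (d 0) (k, d 1, d 2) : LZ) * T k) = _
          rw [h1, h2]
        rw [this, sub_self]
      · rw [if_neg h2, if_neg (by tauto), sub_zero]
  · -- main equation
    apply MvPowerSeries.ext; intro d
    have lhs : (MvPowerSeries.coeff (R := LZ) d) vertGL
        = ∑ k ∈ Finset.Icc (-(d 0 : ℤ)) (d 0 : ℤ),
            (pathCount vertStep (d 0) (k, d 1, d 2) : LZ) * T k := rfl
    rw [lhs, main_coeff (d 0) (d 1) (d 2), map_add, map_add, map_add, map_add, map_add]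
    -- E1
    have E1 : (MvPowerSeries.coeff (R := LZ) d) (1 : MvPowerSeries (Fin 3) LZ)
        = (if d 0 = 0 ∧ d 1 = 0 ∧ d 2 = 0 then 1 else 0) := by
      rw [MvPowerSeries.coeff_one]
      congr 1
      rw [eq_iff_iff]
      exact dz_iff d
    -- E2
    have hassoc2 : (MvPowerSeries.X 0 * MvPowerSeries.X 1 * MvPowerSeries.X 2 * vertGL
        : MvPowerSeries (Fin 3) LZ)
        = MvPowerSeries.X 0 * (MvPowerSeries.X 1 * (MvPowerSeries.X 2 * vertGL)) := by ring
    have ea1 : (d - Finsupp.single 0 1 : Fin 3 →₀ ℕ) 1 = d 1 := by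
      simp [Finsupp.tsub_apply, Finsupp.single_apply]
    have ea2 : (d - Finsupp.single 0 1 - Finsupp.single 1 1 : Fin 3 →₀ ℕ) 2 = d 2 := by
      simp [Finsupp.tsub_apply, Finsupp.single_apply]
    have em0 : (d - Finsupp.single 0 1 - Finsupp.single 1 1 - Finsupp.single 2 1 : Fin 3 →₀ ℕ) 0
        = d 0 - 1 := by simp [Finsupp.tsub_apply, Finsupp.single_apply]
    have em1 : (d - Finsupp.single 0 1 - Finsupp.single 1 1 - Finsupp.single 2 1 : Fin 3 →₀ ℕ) 1
        = d 1 - 1 := by simp [Finsupp.tsub_apply, Finsupp.single_apply]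
    have em2 : (d - Finsupp.single 0 1 - Finsupp.single 1 1 - Finsupp.single 2 1 : Fin 3 →₀ ℕ) 2
        = d 2 - 1 := by simp [Finsupp.tsub_apply, Finsupp.single_apply]
    have E2 : (MvPowerSeries.coeff (R := LZ) d)
        (MvPowerSeries.X 0 * MvPowerSeries.X 1 * MvPowerSeries.X 2 * vertGL)
        = (if 1 ≤ d 0 ∧ 1 ≤ d 1 ∧ 1 ≤ d 2 then
            ∑ k ∈ Finset.Icc (-(d 0 - 1 : ℕ) : ℤ) ((d 0 - 1 : ℕ) : ℤ),
              (pathCount vertStep (d 0 - 1) (k, d 1 - 1, d 2 - 1) : LZ) * T k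
          else 0) := by
      rw [hassoc2, coeffXmul, coeffXmul, coeffXmul, ea1, ea2]
      have evG : (MvPowerSeries.coeff (R := LZ)
            (d - Finsupp.single 0 1 - Finsupp.single 1 1 - Finsupp.single 2 1)) vertGL
          = ∑ k ∈ Finset.Icc (-(d 0 - 1 : ℕ) : ℤ) ((d 0 - 1 : ℕ) : ℤ),
              (pathCount vertStep (d 0 - 1) (k, d 1 - 1, d 2 - 1) : LZ) * T k := by
        show (∑ k ∈ Finset.Icc
            (-((d - Finsupp.single 0 1 - Finsupp.single 1 1 - Finsupp.single 2 1 : Fin 3 →₀ ℕ) 0 : ℤ))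
            (((d - Finsupp.single 0 1 - Finsupp.single 1 1 - Finsupp.single 2 1 : Fin 3 →₀ ℕ)) 0 : ℤ),
          (pathCount vertStep ((d - Finsupp.single 0 1 - Finsupp.single 1 1 - Finsupp.single 2 1 : Fin 3 →₀ ℕ) 0)
            (k, (d - Finsupp.single 0 1 - Finsupp.single 1 1 - Finsupp.single 2 1 : Fin 3 →₀ ℕ) 1,
              (d - Finsupp.single 0 1 - Finsupp.single 1 1 - Finsupp.single 2 1 : Fin 3 →₀ ℕ) 2) : LZ) * T k) = _
        rw [em0, em1, em2]
      rw [evG]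
      by_cases h0 : 1 ≤ d 0 <;> by_cases h1 : 1 ≤ d 1 <;> by_cases h2 : 1 ≤ d 2 <;>
        simp [h0, h1, h2]
    -- E3
    have eb0 : ((d - Finsupp.single 0 1) + Finsupp.single 1 1 : Fin 3 →₀ ℕ) 0 = d 0 - 1 := by
      simp [Finsupp.tsub_apply, Finsupp.add_apply, Finsupp.single_apply]
    have eb1 : ((d - Finsupp.single 0 1) + Finsupp.single 1 1 : Fin 3 →₀ ℕ) 1 = d 1 + 1 := by
      simp [Finsupp.tsub_apply, Finsupp.add_apply, Finsupp.single_apply]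
    have eb2 : ((d - Finsupp.single 0 1) + Finsupp.single 1 1 : Fin 3 →₀ ℕ) 2 = d 2 := by
      simp [Finsupp.tsub_apply, Finsupp.add_apply, Finsupp.single_apply]
    have E3 : (MvPowerSeries.coeff (R := LZ) d)
        (MvPowerSeries.X 0 *
          Qone)
        = (if 1 ≤ d 0 then
            ∑ k ∈ Finset.Icc (-(d 0 - 1 : ℕ) : ℤ) ((d 0 - 1 : ℕ) : ℤ),
              (pathCount vertStep (d 0 - 1) (k, d 1 + 1, d 2) : LZ) * T k
          else 0) := by
      rw [coeffXmul]
      refine if_congr Iff.rfl ?_ rfl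
      show (∑ k ∈ Finset.Icc
          (-(((d - Finsupp.single 0 1) + Finsupp.single 1 1 : Fin 3 →₀ ℕ) 0 : ℤ))
          ((((d - Finsupp.single 0 1) + Finsupp.single 1 1 : Fin 3 →₀ ℕ)) 0 : ℤ),
        (pathCount vertStep (((d - Finsupp.single 0 1) + Finsupp.single 1 1 : Fin 3 →₀ ℕ) 0)
          (k, ((d - Finsupp.single 0 1) + Finsupp.single 1 1 : Fin 3 →₀ ℕ) 1,
            ((d - Finsupp.single 0 1) + Finsupp.single 1 1 : Fin 3 →₀ ℕ) 2) : LZ) * T k) = _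
      rw [eb0, eb1, eb2]
    -- E4
    have ec0 : ((d - Finsupp.single 0 1) + Finsupp.single 2 1 : Fin 3 →₀ ℕ) 0 = d 0 - 1 := by
      simp [Finsupp.tsub_apply, Finsupp.add_apply, Finsupp.single_apply]
    have ec1 : ((d - Finsupp.single 0 1) + Finsupp.single 2 1 : Fin 3 →₀ ℕ) 1 = d 1 := by
      simp [Finsupp.tsub_apply, Finsupp.add_apply, Finsupp.single_apply]
    have ec2 : ((d - Finsupp.single 0 1) + Finsupp.single 2 1 : Fin 3 →₀ ℕ) 2 = d 2 + 1 := by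
      simp [Finsupp.tsub_apply, Finsupp.add_apply, Finsupp.single_apply]
    have E4 : (MvPowerSeries.coeff (R := LZ) d)
        (MvPowerSeries.X 0 *
          Qtwo)
        = (if 1 ≤ d 0 then
            ∑ k ∈ Finset.Icc (-(d 0 - 1 : ℕ) : ℤ) ((d 0 - 1 : ℕ) : ℤ),
              (pathCount vertStep (d 0 - 1) (k, d 1, d 2 + 1) : LZ) * T k
          else 0) := by
      rw [coeffXmul]
      refine if_congr Iff.rfl ?_ rfl
      show (∑ k ∈ Finset.Icc
          (-(((d - Finsupp.single 0 1) + Finsupp.single 2 1 : Fin 3 →₀ ℕ) 0 : ℤ))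
          ((((d - Finsupp.single 0 1) + Finsupp.single 2 1 : Fin 3 →₀ ℕ)) 0 : ℤ),
        (pathCount vertStep (((d - Finsupp.single 0 1) + Finsupp.single 2 1 : Fin 3 →₀ ℕ) 0)
          (k, ((d - Finsupp.single 0 1) + Finsupp.single 2 1 : Fin 3 →₀ ℕ) 1,
            ((d - Finsupp.single 0 1) + Finsupp.single 2 1 : Fin 3 →₀ ℕ) 2) : LZ) * T k) = _
      rw [ec0, ec1, ec2]
    -- E5
    have ed0 : (d - Finsupp.single 0 1 : Fin 3 →₀ ℕ) 0 = d 0 - 1 := by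
      simp [Finsupp.tsub_apply, Finsupp.single_apply]
    have ed1 : (d - Finsupp.single 0 1 : Fin 3 →₀ ℕ) 1 = d 1 := by
      simp [Finsupp.tsub_apply, Finsupp.single_apply]
    have ed2 : (d - Finsupp.single 0 1 : Fin 3 →₀ ℕ) 2 = d 2 := by
      simp [Finsupp.tsub_apply, Finsupp.single_apply]
    have E5 : (MvPowerSeries.coeff (R := LZ) d)
        (MvPowerSeries.X 0 * MvPowerSeries.C (σ := Fin 3) (R := LZ) (T 1) *
          Qthree)
        = (if 1 ≤ d 0 ∧ d 2 = 0 then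
            T 1 * ∑ k ∈ Finset.Icc (-(d 0 - 1 : ℕ) : ℤ) ((d 0 - 1 : ℕ) : ℤ),
              (pathCount vertStep (d 0 - 1) (k, 0, d 1 + 1) : LZ) * T k
          else 0) := by
      rw [show (MvPowerSeries.X 0 * MvPowerSeries.C (σ := Fin 3) (R := LZ) (T 1) *
          Qthree)
        = MvPowerSeries.X 0 * (MvPowerSeries.C (σ := Fin 3) (R := LZ) (T 1) *
          Qthree) from by ring]
      rw [coeffXmul, MvPowerSeries.coeff_C_mul]
      have inner : (MvPowerSeries.coeff (R := LZ) (d - Finsupp.single 0 1))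
          Qthree
          = (if d 2 = 0 then
              ∑ k ∈ Finset.Icc (-(d 0 - 1 : ℕ) : ℤ) ((d 0 - 1 : ℕ) : ℤ),
                (pathCount vertStep (d 0 - 1) (k, 0, d 1 + 1) : LZ) * T k
            else 0) := by
        show (if (d - Finsupp.single 0 1 : Fin 3 →₀ ℕ) 2 = 0 then
            ∑ k ∈ Finset.Icc (-((d - Finsupp.single 0 1 : Fin 3 →₀ ℕ) 0 : ℤ))
                ((d - Finsupp.single 0 1 : Fin 3 →₀ ℕ) 0 : ℤ),
              (pathCount vertStep ((d - Finsupp.single 0 1 : Fin 3 →₀ ℕ) 0)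
                (k, 0, (d - Finsupp.single 0 1 : Fin 3 →₀ ℕ) 1 + 1) : LZ) * T k
          else 0) = _
        rw [ed0, ed1, ed2]
      rw [inner]
      by_cases h0 : 1 ≤ d 0 <;> by_cases h2 : d 2 = 0 <;> simp [h0, h2]
    -- E6
    have ee2a : (d - Finsupp.single 0 1 - Finsupp.single 2 1 : Fin 3 →₀ ℕ) 2 = d 2 - 1 := by
      simp [Finsupp.tsub_apply, Finsupp.single_apply]
    have ef0 : (d - Finsupp.single 0 1 - Finsupp.single 2 1 - Finsupp.single 2 1 : Fin 3 →₀ ℕ) 0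
        = d 0 - 1 := by simp [Finsupp.tsub_apply, Finsupp.single_apply]
    have ef1 : (d - Finsupp.single 0 1 - Finsupp.single 2 1 - Finsupp.single 2 1 : Fin 3 →₀ ℕ) 1
        = d 1 := by simp [Finsupp.tsub_apply, Finsupp.single_apply]
    have ef2 : (d - Finsupp.single 0 1 - Finsupp.single 2 1 - Finsupp.single 2 1 : Fin 3 →₀ ℕ) 2
        = d 2 - 2 := by
      simp [Finsupp.tsub_apply, Finsupp.single_apply]
      omega
    have E6 : (MvPowerSeries.coeff (R := LZ) d)
        (MvPowerSeries.X 0 * MvPowerSeries.C (σ := Fin 3) (R := LZ) (T (-1)) *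
          MvPowerSeries.X 2 ^ 2 * vertGLy0)
        = (if 1 ≤ d 0 ∧ 2 ≤ d 2 ∧ d 1 = 0 then
            T (-1) * ∑ k ∈ Finset.Icc (-(d 0 - 1 : ℕ) : ℤ) ((d 0 - 1 : ℕ) : ℤ),
              (pathCount vertStep (d 0 - 1) (k, d 2 - 2, 0) : LZ) * T k
          else 0) := by
      rw [show (MvPowerSeries.X 0 * MvPowerSeries.C (σ := Fin 3) (R := LZ) (T (-1)) *
          MvPowerSeries.X 2 ^ 2 * vertGLy0)
        = MvPowerSeries.X 0 * (MvPowerSeries.C (σ := Fin 3) (R := LZ) (T (-1)) *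
          (MvPowerSeries.X 2 * (MvPowerSeries.X 2 * vertGLy0))) from by ring]
      rw [coeffXmul, MvPowerSeries.coeff_C_mul, coeffXmul, coeffXmul, ed2, ee2a]
      have inner : (MvPowerSeries.coeff (R := LZ)
            (d - Finsupp.single 0 1 - Finsupp.single 2 1 - Finsupp.single 2 1)) vertGLy0
          = (if d 1 = 0 then
              ∑ k ∈ Finset.Icc (-(d 0 - 1 : ℕ) : ℤ) ((d 0 - 1 : ℕ) : ℤ),
                (pathCount vertStep (d 0 - 1) (k, d 2 - 2, 0) : LZ) * T k
            else 0) := by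
        show (if (d - Finsupp.single 0 1 - Finsupp.single 2 1 - Finsupp.single 2 1 : Fin 3 →₀ ℕ) 1 = 0 then
            ∑ k ∈ Finset.Icc
                (-((d - Finsupp.single 0 1 - Finsupp.single 2 1 - Finsupp.single 2 1 : Fin 3 →₀ ℕ) 0 : ℤ))
                ((d - Finsupp.single 0 1 - Finsupp.single 2 1 - Finsupp.single 2 1 : Fin 3 →₀ ℕ) 0 : ℤ),
              (pathCount vertStep
                ((d - Finsupp.single 0 1 - Finsupp.single 2 1 - Finsupp.single 2 1 : Fin 3 →₀ ℕ) 0)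
                (k, (d - Finsupp.single 0 1 - Finsupp.single 2 1 - Finsupp.single 2 1 : Fin 3 →₀ ℕ) 2,
                  0) : LZ) * T k
          else 0) = _
        rw [ef0, ef1, ef2]
      rw [inner]
      split_ifs <;> first | omega | (exfalso; omega) | simp | rfl
    rw [E1, E2, E3, E4, E5, E6]
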